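/- Let K be the standard middle-thirds Cantor set embedded in the 2-sphere S². For any two Cantor sets C, C' contained in an open disk U ⊆ S² together with a sequence of pairwise disjoint closed disks (A_n) in U Hausdorff-converging to a single point x, such that (C ∪ C') \ {x} ⊆ ⋃ A_n, ∂A_n ∩ (C ∪ C') = ∅, and each A_n contains points of both C and C': if for each n there is a homeomorphism g_n of A_n fixing ∂A_n and taking C ∩ A_n to C' ∩ A_n, and diam(A_n) → 0, then the infinite composition g = … ∘ g_1 ∘ g_0 (extended by the identity outside ⋃A_n) is a well-defined homeomorphism of U taking C to C'. -/

import Mathlib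

open Filter

section glueHelpers

variable {X : Type*} [MetricSpace X]

private lemma dist_le_hd {A : Set X} (hA : IsCompact A) {x y : X} (hy : y ∈ A) :
    dist y x ≤ Metric.hausdorffDist A {x} := by
  have hne : A.Nonempty := ⟨y, hy⟩
  have hed : EMetric.hausdorffEdist A {x} ≠ ⊤ :=
    Metric.hausdorffEdist_ne_top_of_nonempty_of_bounded hne (Set.singleton_nonempty x)
      hA.isBounded Bornology.isBounded_singleton
  calc dist y x = Metric.infDist y {x} := (Metric.infDist_singleton).symm
    _ ≤ _ := Metric.infDist_le_hausdorffDist_of_mem hy hed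

open Classical in
private noncomputable def glueFun (A : ℕ → Set X) (f : ℕ → X → X) (y : X) : X :=
  if h : ∃ n, y ∈ A n then f h.choose y else y

private lemma glueFun_eq_of_mem {A : ℕ → Set X} (f : ℕ → X → X)
    (hAdisj : ∀ m n, m ≠ n → Disjoint (A m) (A n)) {n : ℕ} {y : X} (hy : y ∈ A n) :
    glueFun A f y = f n y := by
  have h : ∃ m, y ∈ A m := ⟨n, hy⟩
  have hch : h.choose = n := by
    by_contra hne
    exact Set.disjoint_left.mp (hAdisj _ _ hne) h.choose_spec hy
  unfold glueFun
  rw [dif_pos h, hch]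

private lemma glueFun_eq_of_not_mem {A : ℕ → Set X} (f : ℕ → X → X) {y : X}
    (hy : y ∉ ⋃ n, A n) : glueFun A f y = y := by
  unfold glueFun
  rw [dif_neg]
  rintro ⟨n, hn⟩
  exact hy (Set.mem_iUnion.mpr ⟨n, hn⟩)

private lemma glue_continuous (A : ℕ → Set X) (x : X)
    (hAclosed : ∀ n, IsClosed (A n))
    (hAcpt : ∀ n, IsCompact (A n))
    (hAne : ∀ n, (A n).Nonempty)
    (hAdisj : ∀ m n, m ≠ n → Disjoint (A m) (A n))
    (hAHaus : Tendsto (fun n => Metric.hausdorffDist (A n) {x}) atTop (nhds 0))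
    (f : ℕ → X → X)
    (hfc : ∀ n, ContinuousOn (f n) (A n))
    (hfm : ∀ n, Set.MapsTo (f n) (A n) (A n))
    (hffix : ∀ n, Set.EqOn (f n) id (frontier (A n))) :
    Continuous (glueFun A f) := by
  have tail : ∀ ε : ℝ, 0 < ε → ∃ N, ∀ m, N ≤ m → ∀ y ∈ A m, dist y x < ε := by
    intro ε hε
    have h1 := Metric.tendsto_nhds.mp hAHaus ε hε
    obtain ⟨N, hN0⟩ := eventually_atTop.mp h1
    refine ⟨N, fun m hm y hy => ?_⟩
    have h2 := hN0 m hm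
    rw [Real.dist_0_eq_abs] at h2
    exact lt_of_le_of_lt (dist_le_hd (hAcpt m) hy)
      (lt_of_le_of_lt (le_abs_self _) h2)
  have hxfr : ∀ n, x ∈ A n → x ∈ frontier (A n) := by
    intro n hn
    rw [(hAclosed n).frontier_eq]
    refine ⟨hn, fun hint => ?_⟩
    rw [mem_interior_iff_mem_nhds, Metric.mem_nhds_iff] at hint
    obtain ⟨ε, hε, hball⟩ := hint
    obtain ⟨N, hN⟩ := tail ε hε
    set m := max N (n + 1) with hm
    have hmn : m ≠ n := (Nat.lt_of_lt_of_le (Nat.lt_succ_self n) (le_max_right _ _)).ne'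
    obtain ⟨y, hy⟩ := hAne m
    have hyn : y ∈ A n := hball (by
      rw [Metric.mem_ball]
      exact hN m (le_max_left _ _) y hy)
    exact Set.disjoint_left.mp (hAdisj m n hmn) hy hyn
  rw [continuous_iff_continuousAt]
  intro p
  by_cases hpx : p = x
  · subst hpx
    have hFx : glueFun A f p = p := by
      by_cases hpA : ∃ n, p ∈ A n
      · obtain ⟨n, hn⟩ := hpA
        rw [glueFun_eq_of_mem f hAdisj hn]
        exact hffix n (hxfr n hn)
      · exact glueFun_eq_of_not_mem f (by simpa using hpA)
    have key : Tendsto (glueFun A f) (nhds p) (nhds p) := by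
      rw [Metric.tendsto_nhds]
      intro ε hε
      obtain ⟨N, hN⟩ := tail ε hε
      have Ev3 : ∀ᶠ y in nhds p, dist y p < ε := by
        filter_upwards [Metric.ball_mem_nhds p hε] with y hy
        exact Metric.mem_ball.mp hy
      have Evsmall : ∀ᶠ y in nhds p, ∀ m ∈ Finset.range N, p ∉ A m → y ∉ A m := by
        rw [Filter.eventually_all_finset]
        intro m _
        by_cases hxm : p ∈ A m
        · filter_upwards with y
          exact fun hc => absurd hxm hc
        · filter_upwards [(hAclosed m).isOpen_compl.mem_nhds hxm] with y hy
          exact fun _ => hy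
      by_cases hxA : ∃ n, p ∈ A n
      · obtain ⟨n, hn⟩ := hxA
        have hfnx : f n p = p := hffix n (hxfr n hn)
        have EvAn : ∀ᶠ y in nhds p, y ∈ A n → dist (f n y) p < ε := by
          have hcw : Tendsto (f n) (nhdsWithin p (A n)) (nhds (f n p)) := hfc n p hn
          rw [hfnx] at hcw
          have h3 := Metric.tendsto_nhds.mp hcw ε hε
          rwa [eventually_nhdsWithin_iff] at h3
        filter_upwards [Ev3, Evsmall, EvAn] with y h3 hs hAn
        by_cases hyA : ∃ m, y ∈ A m
        · obtain ⟨m, hm⟩ := hyA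
          rw [glueFun_eq_of_mem f hAdisj hm]
          by_cases hmN : m < N
          · have hxm : p ∈ A m := by
              by_contra hxm
              exact hs m (Finset.mem_range.mpr hmN) hxm hm
            have hmn : m = n := by
              by_contra hne
              exact Set.disjoint_left.mp (hAdisj m n hne) hxm hn
            subst hmn
            exact hAn hm
          · exact hN m (le_of_not_gt hmN) _ (hfm m hm)
        · rw [glueFun_eq_of_not_mem f (by simpa using hyA)]
          exact h3
      · filter_upwards [Ev3, Evsmall] with y h3 hs
        by_cases hyA : ∃ m, y ∈ A m
        · obtain ⟨m, hm⟩ := hyA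
          rw [glueFun_eq_of_mem f hAdisj hm]
          by_cases hmN : m < N
          · exact absurd hm (hs m (Finset.mem_range.mpr hmN) (fun hc => hxA ⟨m, hc⟩))
          · exact hN m (le_of_not_gt hmN) _ (hfm m hm)
        · rw [glueFun_eq_of_not_mem f (by simpa using hyA)]
          exact h3
    have hgoal : Tendsto (glueFun A f) (nhds p) (nhds (glueFun A f p)) := by
      rw [hFx]; exact key
    exact hgoal
  · have hD : 0 < dist p x := dist_pos.mpr hpx
    obtain ⟨N, hN⟩ := tail (dist p x / 2) (by linarith)
    have hballN : ∀ m, N ≤ m → ∀ y ∈ A m, y ∉ Metric.ball p (dist p x / 2) := by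
      intro m hm y hy hball
      rw [Metric.mem_ball] at hball
      have h1 := hN m hm y hy
      have htri : dist p x ≤ dist p y + dist y x := dist_triangle p y x
      rw [dist_comm p y] at htri
      linarith
    by_cases hpA : ∃ n, p ∈ A n
    · obtain ⟨n, hn⟩ := hpA
      by_cases hint : p ∈ interior (A n)
      · have hmem : A n ∈ nhds p := mem_interior_iff_mem_nhds.mp hint
        have hca : ContinuousAt (f n) p := (hfc n).continuousAt hmem
        refine hca.congr ?_
        filter_upwards [hmem] with y hy
        exact (glueFun_eq_of_mem f hAdisj hy).symm
      · have hfr : p ∈ frontier (A n) := by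
          rw [(hAclosed n).frontier_eq]; exact ⟨hn, hint⟩
        have hFp : glueFun A f p = p := by
          rw [glueFun_eq_of_mem f hAdisj hn]
          exact hffix n hfr
        set W := Metric.ball p (dist p x / 2) ∩
          ⋂ m ∈ (Finset.range N).erase n, (A m)ᶜ with hW
        have hWopen : IsOpen W :=
          Metric.isOpen_ball.inter (isOpen_biInter_finset fun m _ => (hAclosed m).isOpen_compl)
        have hpW : p ∈ W := by
          refine ⟨Metric.mem_ball_self (by linarith), ?_⟩
          simp only [Set.mem_iInter, Set.mem_compl_iff]
          intro m hm hpm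
          exact Set.disjoint_left.mp (hAdisj m n (Finset.ne_of_mem_erase hm)) hpm hn
        have hWonly : ∀ y ∈ W, ∀ m, y ∈ A m → m = n := by
          intro y hy m hm
          by_contra hne
          by_cases hmem : m ∈ (Finset.range N).erase n
          · exact (Set.mem_iInter₂.mp hy.2 m hmem) hm
          · have hNm : N ≤ m := by
              by_contra hlt
              exact hmem (Finset.mem_erase.mpr ⟨hne, Finset.mem_range.mpr (lt_of_not_ge hlt)⟩)
            exact hballN m hNm y hm hy.1
        have cw1 : ContinuousWithinAt (glueFun A f) (A n) p :=
          (hfc n p hn).congr (fun y hy => glueFun_eq_of_mem f hAdisj hy)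
            (glueFun_eq_of_mem f hAdisj hn)
        have cw2 : ContinuousWithinAt (glueFun A f) (W \ A n) p := by
          refine (continuousAt_id.continuousWithinAt).congr ?_ hFp
          intro y hy
          refine glueFun_eq_of_not_mem f ?_
          rw [Set.mem_iUnion]
          rintro ⟨m, hm⟩
          have hmn := hWonly y hy.1 m hm
          rw [hmn] at hm
          exact hy.2 hm
        refine (cw1.union cw2).continuousAt ?_
        refine Filter.mem_of_superset (hWopen.mem_nhds hpW) fun y hy => ?_
        by_cases hyn : y ∈ A n
        · exact Or.inl hyn
        · exact Or.inr ⟨hy, hyn⟩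
    · set W := Metric.ball p (dist p x / 2) ∩ ⋂ m ∈ Finset.range N, (A m)ᶜ with hW
      have hWopen : IsOpen W :=
        Metric.isOpen_ball.inter (isOpen_biInter_finset fun m _ => (hAclosed m).isOpen_compl)
      have hpW : p ∈ W := by
        refine ⟨Metric.mem_ball_self (by linarith), ?_⟩
        simp only [Set.mem_iInter, Set.mem_compl_iff]
        exact fun m _ hm => hpA ⟨m, hm⟩
      have hWid : ∀ y ∈ W, glueFun A f y = y := by
        intro y hy
        refine glueFun_eq_of_not_mem f ?_
        rw [Set.mem_iUnion]
        rintro ⟨m, hm⟩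
        by_cases hmN : m < N
        · exact (Set.mem_iInter₂.mp hy.2 m (Finset.mem_range.mpr hmN)) hm
        · exact hballN m (le_of_not_gt hmN) y hm hy.1
      refine continuousAt_id.congr ?_
      filter_upwards [hWopen.mem_nhds hpW] with y hy
      exact (hWid y hy).symm

private lemma exists_cont_inv {K : Set X} (hK : IsCompact K) {f : X → X}
    (hfc : ContinuousOn f K) (hbij : Set.BijOn f K K) :
    ∃ h : X → X, ContinuousOn h K ∧ Set.MapsTo h K K ∧ Set.InvOn h f K K := by
  classical
  haveI : CompactSpace K := isCompact_iff_compactSpace.mp hK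
  let F : K → K := Set.MapsTo.restrict f K K hbij.mapsTo
  have hFc : Continuous F := hfc.mapsToRestrict hbij.mapsTo
  have hFbij : Function.Bijective F := by
    constructor
    · rintro ⟨a, ha⟩ ⟨b, hb⟩ hab
      exact Subtype.ext (hbij.injOn ha hb (congrArg Subtype.val hab))
    · rintro ⟨b, hb⟩
      obtain ⟨a, ha, hab⟩ := hbij.surjOn hb
      exact ⟨⟨a, ha⟩, Subtype.ext hab⟩
  let E : K ≃ K := Equiv.ofBijective F hFbij
  have hEc : Continuous (E : K → K) := hFc
  let H : K ≃ₜ K := Continuous.homeoOfEquivCompactToT2 (f := E) hEc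
  refine ⟨fun y => if hy : y ∈ K then (H.symm ⟨y, hy⟩ : X) else y, ?_, ?_, ?_, ?_⟩
  · rw [continuousOn_iff_continuous_restrict]
    have hres : K.domRestrict (fun y => if hy : y ∈ K then (H.symm ⟨y, hy⟩ : X) else y)
        = fun q : K => (H.symm q : X) := by
      funext q
      obtain ⟨y, hy⟩ := q
      simp [Set.domRestrict, hy]
    rw [hres]
    exact continuous_subtype_val.comp H.symm.continuous
  · intro y hy
    simp only [dif_pos hy]
    exact (H.symm ⟨y, hy⟩).2
  · intro y hy
    have hfy : f y ∈ K := hbij.mapsTo hy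
    simp only [dif_pos hfy]
    have hH : (⟨f y, hfy⟩ : K) = H ⟨y, hy⟩ := Subtype.ext rfl
    rw [hH, Homeomorph.symm_apply_apply]
  · intro y hy
    simp only [dif_pos hy]
    have h2 : ((H (H.symm ⟨y, hy⟩) : K) : X) = y := by
      rw [Homeomorph.apply_symm_apply]
    calc f ((H.symm ⟨y, hy⟩ : K) : X) = ((H (H.symm ⟨y, hy⟩) : K) : X) := rfl
      _ = y := h2

end glueHelpers

/-- Let `U` be an open disk (in the sphere) containing two Cantor sets `C, C'`, a point `x`,
and pairwise disjoint closed disks `A n` Hausdorff-converging to `{x}` with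
`(C ∪ C') \ {x} ⊆ ⋃ A n`, `∂Aₙ ∩ (C ∪ C') = ∅`, each `A n` meeting both `C` and `C'`.
If for each `n` there is a homeomorphism `g n` of `A n` fixing `∂Aₙ` and taking `C ∩ A n`
to `C' ∩ A n`, and `diam (A n) → 0`, then the infinite composition (extended by the identity
outside `⋃ A n`) is a well-defined homeomorphism of `U` taking `C` to `C'`. -/
theorem stmt8 {X : Type*} [MetricSpace X] (U : Set X) (hU : IsOpen U)
    (C C' : Set X) (hCU : C ⊆ U) (hC'U : C' ⊆ U)
    -- `C` and `C'` are Cantor sets: compact, totally disconnected, perfect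
    (hC : IsCompact C ∧ IsTotallyDisconnected C ∧ Perfect C)
    (hC' : IsCompact C' ∧ IsTotallyDisconnected C' ∧ Perfect C')
    (x : X) (hxU : x ∈ U)
    (A : ℕ → Set X)
    (hAU : ∀ n, A n ⊆ U)
    (hAclosed : ∀ n, IsClosed (A n))
    (hAcpt : ∀ n, IsCompact (A n))
    (hAdisj : ∀ m n, m ≠ n → Disjoint (A m) (A n))
    (hAHaus : Tendsto (fun n => Metric.hausdorffDist (A n) {x}) atTop (nhds 0))
    (hfront : ∀ n, frontier (A n) ∩ (C ∪ C') = ∅)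
    (hcover : (C ∪ C') \ {x} ⊆ ⋃ n, A n)
    (hmeet : ∀ n, (A n ∩ C).Nonempty ∧ (A n ∩ C').Nonempty)
    (g : ℕ → X → X)
    (hgcont : ∀ n, ContinuousOn (g n) (A n))
    (hgbij : ∀ n, Set.BijOn (g n) (A n) (A n))
    (hgfix : ∀ n, Set.EqOn (g n) id (frontier (A n)))
    (hgC : ∀ n, g n '' (C ∩ A n) = C' ∩ A n)
    (hdiam : Tendsto (fun n => Metric.diam (A n)) atTop (nhds 0)) :
    ∃ G : U ≃ₜ U,
      (∀ (n : ℕ) (p : U), (p : X) ∈ A n → ((G p : X) = g n (p : X))) ∧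
      (∀ p : U, (p : X) ∉ (⋃ n, A n) → G p = p) ∧
      (Subtype.val '' ((fun p => G p) '' (Subtype.val ⁻¹' C : Set U)) = C') := by
  classical
  obtain ⟨hCcpt, -, -⟩ := hC
  obtain ⟨hC'cpt, -, -⟩ := hC'
  have hAne : ∀ n, (A n).Nonempty := fun n => ((hmeet n).1).mono Set.inter_subset_left
  have hinv : ∀ n, ∃ h : X → X, ContinuousOn h (A n) ∧ Set.MapsTo h (A n) (A n) ∧
      Set.InvOn h (g n) (A n) (A n) :=
    fun n => exists_cont_inv (hAcpt n) (hgcont n) (hgbij n)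
  choose h hhc hhm hhinv using hinv
  have hhfix : ∀ n, Set.EqOn (h n) id (frontier (A n)) := by
    intro n y hy
    have hyA : y ∈ A n := (hAclosed n).frontier_subset hy
    have h1 : g n y = y := hgfix n hy
    have h2 : h n (g n y) = y := (hhinv n).1 hyA
    rw [h1] at h2
    exact h2
  set GG := glueFun A g with hGGdef
  set HH := glueFun A h with hHHdef
  have contGG : Continuous GG :=
    glue_continuous A x hAclosed hAcpt hAne hAdisj hAHaus g hgcont
      (fun n => (hgbij n).mapsTo) hgfix
  have contHH : Continuous HH :=
    glue_continuous A x hAclosed hAcpt hAne hAdisj hAHaus h hhc hhm hhfix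
  have hLI : ∀ y, HH (GG y) = y := by
    intro y
    by_cases hy : ∃ n, y ∈ A n
    · obtain ⟨n, hn⟩ := hy
      rw [hGGdef, glueFun_eq_of_mem g hAdisj hn, hHHdef,
        glueFun_eq_of_mem h hAdisj ((hgbij n).mapsTo hn)]
      exact (hhinv n).1 hn
    · have hy' : y ∉ ⋃ n, A n := by simpa using hy
      rw [hGGdef, glueFun_eq_of_not_mem g hy', hHHdef, glueFun_eq_of_not_mem h hy']
  have hRI : ∀ y, GG (HH y) = y := by
    intro y
    by_cases hy : ∃ n, y ∈ A n
    · obtain ⟨n, hn⟩ := hy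
      rw [hHHdef, glueFun_eq_of_mem h hAdisj hn, hGGdef,
        glueFun_eq_of_mem g hAdisj (hhm n hn)]
      exact (hhinv n).2 hn
    · have hy' : y ∉ ⋃ n, A n := by simpa using hy
      rw [hHHdef, glueFun_eq_of_not_mem h hy', hGGdef, glueFun_eq_of_not_mem g hy']
  have hGGU : ∀ y ∈ U, GG y ∈ U := by
    intro y hy
    by_cases hyA : ∃ n, y ∈ A n
    · obtain ⟨n, hn⟩ := hyA
      rw [hGGdef, glueFun_eq_of_mem g hAdisj hn]
      exact hAU n ((hgbij n).mapsTo hn)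
    · rw [hGGdef, glueFun_eq_of_not_mem g (by simpa using hyA)]
      exact hy
  have hHHU : ∀ y ∈ U, HH y ∈ U := by
    intro y hy
    by_cases hyA : ∃ n, y ∈ A n
    · obtain ⟨n, hn⟩ := hyA
      rw [hHHdef, glueFun_eq_of_mem h hAdisj hn]
      exact hAU n (hhm n hn)
    · rw [hHHdef, glueFun_eq_of_not_mem h (by simpa using hyA)]
      exact hy
  -- x belongs to both Cantor sets
  have hxC : x ∈ C := by
    have hcex : ∀ n, ∃ y, y ∈ A n ∩ C := fun n => (hmeet n).1
    choose c hc using hcex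
    have htend : Tendsto c atTop (nhds x) := by
      rw [tendsto_iff_dist_tendsto_zero]
      exact squeeze_zero (fun n => dist_nonneg)
        (fun n => dist_le_hd (hAcpt n) (hc n).1) hAHaus
    exact hCcpt.isClosed.mem_of_tendsto htend (Filter.Eventually.of_forall fun n => (hc n).2)
  have hxC' : x ∈ C' := by
    have hcex : ∀ n, ∃ y, y ∈ A n ∩ C' := fun n => (hmeet n).2
    choose c hc using hcex
    have htend : Tendsto c atTop (nhds x) := by
      rw [tendsto_iff_dist_tendsto_zero]
      exact squeeze_zero (fun n => dist_nonneg)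
        (fun n => dist_le_hd (hAcpt n) (hc n).1) hAHaus
    exact hC'cpt.isClosed.mem_of_tendsto htend (Filter.Eventually.of_forall fun n => (hc n).2)
  have himg : GG '' C = C' := by
    apply Set.Subset.antisymm
    · rintro z ⟨c, hcC, rfl⟩
      by_cases hcA : ∃ n, c ∈ A n
      · obtain ⟨n, hn⟩ := hcA
        have he : GG c = g n c := glueFun_eq_of_mem g hAdisj hn
        rw [he]
        have hmem : g n c ∈ C' ∩ A n := by
          rw [← hgC n]
          exact ⟨c, ⟨hcC, hn⟩, rfl⟩
        exact hmem.1
      · have hcx : c = x := by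
          by_contra hne
          exact hcA (Set.mem_iUnion.mp (hcover ⟨Or.inl hcC, by simpa using hne⟩))
        subst hcx
        have he : GG c = c := glueFun_eq_of_not_mem g (by simpa using hcA)
        rw [he]
        exact hxC'
    · intro z hz
      by_cases hzA : ∃ n, z ∈ A n
      · obtain ⟨n, hn⟩ := hzA
        have hmem : z ∈ C' ∩ A n := ⟨hz, hn⟩
        rw [← hgC n] at hmem
        obtain ⟨c, ⟨hcC, hcA⟩, hcz⟩ := hmem
        refine ⟨c, hcC, ?_⟩
        rw [hGGdef, glueFun_eq_of_mem g hAdisj hcA]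
        exact hcz
      · have hzx : z = x := by
          by_contra hne
          exact hzA (Set.mem_iUnion.mp (hcover ⟨Or.inr hz, by simpa using hne⟩))
        subst hzx
        exact ⟨z, hxC, glueFun_eq_of_not_mem g (by simpa using hzA)⟩
  let G : U ≃ₜ U :=
    { toFun := fun p => ⟨GG p, hGGU p p.2⟩
      invFun := fun p => ⟨HH p, hHHU p p.2⟩
      left_inv := fun p => Subtype.ext (hLI p)
      right_inv := fun p => Subtype.ext (hRI p)
      continuous_toFun := Continuous.subtype_mk (contGG.comp continuous_subtype_val) _
      continuous_invFun := Continuous.subtype_mk (contHH.comp continuous_subtype_val) _ }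
  refine ⟨G, ?_, ?_, ?_⟩
  · intro n p hp
    exact glueFun_eq_of_mem g hAdisj hp
  · intro p hp
    exact Subtype.ext (glueFun_eq_of_not_mem g hp)
  · rw [← himg]
    ext z
    constructor
    · rintro ⟨q, ⟨p, hpC, rfl⟩, rfl⟩
      exact ⟨p.val, hpC, rfl⟩
    · rintro ⟨c, hcC, rfl⟩
      exact ⟨G ⟨c, hCU hcC⟩, ⟨⟨c, hCU hcC⟩, hcC, rfl⟩, rfl⟩
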